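/- Let Q : [0,T] × [0,U] → [0,∞) be continuous and nondecreasing in each variable, and suppose Q(t,u) ≤ C·Q(0,u) + c·∫₀^t Q(t',u) dt' + c·∫₀^u Q(t,u') du' for all (t,u). Then Q(t,u) ≤ C·Q(0,u)·e^{2ct}·e^{2cu} for all (t,u) ∈ [0,T] × [0,U] (with constant 2c, or any constant c' > c for small enough domains). -/

import Mathlib

open Set intervalIntegral MeasureTheory

lemma aux_exp_int (c a : ℝ) (hc : 0 < c) :
    (∫ x in (0:ℝ)..a, Real.exp (2*c*x)) = (Real.exp (2*c*a) - 1) / (2*c) := by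
  have hderiv : ∀ x ∈ uIcc (0:ℝ) a,
      HasDerivAt (fun y => Real.exp (2*c*y) / (2*c)) (Real.exp (2*c*x)) x := by
    intro x _
    have h1 : HasDerivAt (fun y : ℝ => 2*c*y) (2*c) x := by
      simpa using (hasDerivAt_id x).const_mul (2*c)
    have h2 := (h1.exp).div_const (2*c)
    have hne : (2*c) ≠ 0 := by positivity
    simpa [mul_div_assoc, mul_div_cancel_right₀ _ hne] using h2
  have hint : IntervalIntegrable (fun x => Real.exp (2*c*x)) volume 0 a :=
    (Real.continuous_exp.comp (by continuity)).intervalIntegrable _ _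
  rw [intervalIntegral.integral_eq_sub_of_hasDerivAt hderiv hint]
  rw [mul_zero, Real.exp_zero]
  ring

lemma aux_ae_ne (t₀ : ℝ) : ∀ᵐ x : ℝ, x ≠ t₀ := by
  rw [Filter.eventually_iff, mem_ae_iff]
  have : {x : ℝ | x ≠ t₀}ᶜ = {t₀} := by ext x; simp
  rw [this]
  exact measure_singleton t₀


/-- Two-variable Gronwall inequality: if `Q ≥ 0` is continuous, nondecreasing
in each variable, and satisfies
`Q(t,u) ≤ C·Q(0,u) + c∫₀^t Q(t',u)dt' + c∫₀^u Q(t,u')du'`,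
then `Q(t,u) ≤ C·Q(0,u)·e^{2ct}·e^{2cu}`. -/
theorem stmt11 (T U C c : ℝ) (hT : 0 ≤ T) (hU : 0 ≤ U) (hC : 1 ≤ C) (hc : 0 ≤ c)
    (Q : ℝ → ℝ → ℝ)
    (hcont : ContinuousOn (fun p : ℝ × ℝ => Q p.1 p.2)
      (Set.Icc 0 T ×ˢ Set.Icc 0 U))
    (hnn : ∀ t u, 0 ≤ Q t u)
    (hmono_t : ∀ u ∈ Set.Icc (0 : ℝ) U, MonotoneOn (fun t => Q t u) (Set.Icc 0 T))
    (hmono_u : ∀ t ∈ Set.Icc (0 : ℝ) T, MonotoneOn (fun u => Q t u) (Set.Icc 0 U))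
    (hineq : ∀ t ∈ Set.Icc (0 : ℝ) T, ∀ u ∈ Set.Icc (0 : ℝ) U,
      Q t u ≤ C * Q 0 u + c * (∫ t' in (0 : ℝ)..t, Q t' u)
        + c * (∫ u' in (0 : ℝ)..u, Q t u')) :
    ∀ t ∈ Set.Icc (0 : ℝ) T, ∀ u ∈ Set.Icc (0 : ℝ) U,
      Q t u ≤ C * Q 0 u * Real.exp (2 * c * t) * Real.exp (2 * c * u) := by
  intro t ht u₀ hu₀
  rcases hc.eq_or_lt with hc0 | hcpos
  · have h := hineq t ht u₀ hu₀
    rw [← hc0] at h ⊢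
    simp only [zero_mul, add_zero, mul_zero, Real.exp_zero, mul_one] at h ⊢
    exact h
  -- main case c > 0
  set A := Q 0 u₀ with hAdef
  have hA : 0 ≤ A := hnn 0 u₀
  have hu₀U : u₀ ≤ U := hu₀.2
  have hu₀0 : 0 ≤ u₀ := hu₀.1
  set K : Set (ℝ × ℝ) := Icc (0:ℝ) T ×ˢ Icc (0:ℝ) u₀ with hKdef
  have hKsub : K ⊆ Icc 0 T ×ˢ Icc 0 U :=
    prod_mono_right (Icc_subset_Icc_right hu₀U)
  have hQK : ContinuousOn (fun p : ℝ × ℝ => Q p.1 p.2) K := hcont.mono hKsub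
  have hKcomp : IsCompact K := isCompact_Icc.prod isCompact_Icc
  have key : ∀ ε > 0, ∀ p ∈ K, Q p.1 p.2 < (C*A+ε) * Real.exp (2*c*(p.1+p.2)) := by
    intro ε hε
    by_contra h
    push_neg at h
    obtain ⟨p, hpK, hp⟩ := h
    set S := K ∩ {q : ℝ × ℝ | (C*A+ε) * Real.exp (2*c*(q.1+q.2)) ≤ Q q.1 q.2} with hSdef
    have hSne : S.Nonempty := ⟨p, hpK, hp⟩
    have hf : ContinuousOn
        (fun q : ℝ × ℝ => Q q.1 q.2 - (C*A+ε) * Real.exp (2*c*(q.1+q.2))) K :=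
      hQK.sub (Continuous.continuousOn
        (continuous_const.mul (Real.continuous_exp.comp
          (continuous_const.mul (continuous_fst.add continuous_snd)))))
    have hScl : IsClosed S := by
      have hKcl : IsClosed K := isClosed_Icc.prod isClosed_Icc
      have := hf.preimage_isClosed_of_isClosed hKcl isClosed_Ici (t := Ici 0)
      convert this using 1
      ext q
      simp only [hSdef, mem_inter_iff, mem_setOf_eq, mem_preimage, mem_Ici, sub_nonneg]
    have hScomp : IsCompact S := hKcomp.of_isClosed_subset hScl inter_subset_left
    obtain ⟨⟨t₀, u₁⟩, hp₀, hmin⟩ :=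
      hScomp.exists_isMinOn hSne ((continuous_fst.add continuous_snd).continuousOn)
    have ht₀ : t₀ ∈ Icc (0:ℝ) T := hp₀.1.1
    have hu₁ : u₁ ∈ Icc (0:ℝ) u₀ := hp₀.1.2
    have hψQ : (C*A+ε) * Real.exp (2*c*(t₀+u₁)) ≤ Q t₀ u₁ := hp₀.2
    have hu₁U : u₁ ∈ Icc (0:ℝ) U := ⟨hu₁.1, hu₁.2.trans hu₀U⟩
    have hlt_t : ∀ x ∈ Ico (0:ℝ) t₀, Q x u₁ < (C*A+ε) * Real.exp (2*c*(x+u₁)) := by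
      intro x hx
      by_contra hcon
      push_neg at hcon
      have hxS : (x, u₁) ∈ S := ⟨⟨⟨hx.1, hx.2.le.trans ht₀.2⟩, hu₁⟩, hcon⟩
      have := hmin hxS
      simp only [Function.comp] at this
      have h2 : t₀ + u₁ ≤ x + u₁ := this
      linarith [hx.2]
    have hlt_u : ∀ y ∈ Ico (0:ℝ) u₁, Q t₀ y < (C*A+ε) * Real.exp (2*c*(t₀+y)) := by
      intro y hy
      by_contra hcon
      push_neg at hcon
      have hyS : (t₀, y) ∈ S := ⟨⟨ht₀, ⟨hy.1, hy.2.le.trans hu₁.2⟩⟩, hcon⟩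
      have := hmin hyS
      have h2 : t₀ + u₁ ≤ t₀ + y := this
      linarith [hy.2]
    -- integrability
    have hQt_int : IntervalIntegrable (fun x => Q x u₁) volume 0 t₀ := by
      have hmaps : MapsTo (fun x : ℝ => (x, u₁)) (Icc 0 t₀) K :=
        fun x hx => ⟨⟨hx.1, hx.2.trans ht₀.2⟩, hu₁⟩
      have hctn : ContinuousOn (fun x => Q x u₁) (Icc 0 t₀) :=
        hQK.comp ((continuous_id.prodMk continuous_const).continuousOn) hmaps
      exact hctn.intervalIntegrable_of_Icc ht₀.1
    have hQu_int : IntervalIntegrable (fun y => Q t₀ y) volume 0 u₁ := by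
      have hmaps : MapsTo (fun y : ℝ => (t₀, y)) (Icc 0 u₁) K :=
        fun y hy => ⟨ht₀, ⟨hy.1, hy.2.trans hu₁.2⟩⟩
      have hctn : ContinuousOn (fun y => Q t₀ y) (Icc 0 u₁) :=
        hQK.comp ((continuous_const.prodMk continuous_id).continuousOn) hmaps
      exact hctn.intervalIntegrable_of_Icc hu₁.1
    have hψt_int : IntervalIntegrable
        (fun x => (C*A+ε) * Real.exp (2*c*(x+u₁))) volume 0 t₀ :=
      Continuous.intervalIntegrable
        (continuous_const.mul (Real.continuous_exp.comp
          (continuous_const.mul (continuous_id.add continuous_const)))) _ _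
    have hψu_int : IntervalIntegrable
        (fun y => (C*A+ε) * Real.exp (2*c*(t₀+y))) volume 0 u₁ :=
      Continuous.intervalIntegrable
        (continuous_const.mul (Real.continuous_exp.comp
          (continuous_const.mul (continuous_const.add continuous_id)))) _ _
    -- integral comparisons
    have hI1 : (∫ x in (0:ℝ)..t₀, Q x u₁)
        ≤ ∫ x in (0:ℝ)..t₀, (C*A+ε) * Real.exp (2*c*(x+u₁)) := by
      refine intervalIntegral.integral_mono_ae_restrict ht₀.1 hQt_int hψt_int ?_
      refine (ae_restrict_iff' measurableSet_Icc).2 ?_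
      filter_upwards [aux_ae_ne t₀] with x hxne hxmem
      exact (hlt_t x ⟨hxmem.1, lt_of_le_of_ne hxmem.2 hxne⟩).le
    have hI2 : (∫ y in (0:ℝ)..u₁, Q t₀ y)
        ≤ ∫ y in (0:ℝ)..u₁, (C*A+ε) * Real.exp (2*c*(t₀+y)) := by
      refine intervalIntegral.integral_mono_ae_restrict hu₁.1 hQu_int hψu_int ?_
      refine (ae_restrict_iff' measurableSet_Icc).2 ?_
      filter_upwards [aux_ae_ne u₁] with y hyne hymem
      exact (hlt_u y ⟨hymem.1, lt_of_le_of_ne hymem.2 hyne⟩).le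
    -- integral computations
    have hcmp1 : (∫ x in (0:ℝ)..t₀, (C*A+ε) * Real.exp (2*c*(x+u₁)))
        = (C*A+ε) * Real.exp (2*c*u₁) * ((Real.exp (2*c*t₀) - 1) / (2*c)) := by
      have heq : (fun x => (C*A+ε) * Real.exp (2*c*(x+u₁)))
          = fun x => ((C*A+ε) * Real.exp (2*c*u₁)) * Real.exp (2*c*x) := by
        funext x
        rw [mul_add, Real.exp_add]
        ring
      rw [heq, intervalIntegral.integral_const_mul, aux_exp_int c t₀ hcpos]
    have hcmp2 : (∫ y in (0:ℝ)..u₁, (C*A+ε) * Real.exp (2*c*(t₀+y)))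
        = (C*A+ε) * Real.exp (2*c*t₀) * ((Real.exp (2*c*u₁) - 1) / (2*c)) := by
      have heq : (fun y => (C*A+ε) * Real.exp (2*c*(t₀+y)))
          = fun y => ((C*A+ε) * Real.exp (2*c*t₀)) * Real.exp (2*c*y) := by
        funext y
        rw [mul_add, Real.exp_add]
        ring
      rw [heq, intervalIntegral.integral_const_mul, aux_exp_int c u₁ hcpos]
    have hQ0 : C * Q 0 u₁ ≤ C * A :=
      mul_le_mul_of_nonneg_left
        ((hmono_u 0 ⟨le_refl 0, hT⟩) hu₁U hu₀ hu₁.2) (by linarith)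
    have hmain := hineq t₀ ht₀ u₁ hu₁U
    set a := Real.exp (2*c*t₀) with hadef
    set b := Real.exp (2*c*u₁) with hbdef
    have ha1 : 1 ≤ a := Real.one_le_exp (mul_nonneg (by linarith) ht₀.1)
    have hb1 : 1 ≤ b := Real.one_le_exp (mul_nonneg (by linarith) hu₁.1)
    have hab : Real.exp (2*c*(t₀+u₁)) = a * b := by
      rw [hadef, hbdef, ← Real.exp_add, mul_add]
    have hdiv1 : c * ((C*A+ε) * b * ((a - 1) / (2*c))) = (C*A+ε) * b * (a-1) / 2 := by
      field_simp
    have hdiv2 : c * ((C*A+ε) * a * ((b - 1) / (2*c))) = (C*A+ε) * a * (b-1) / 2 := by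
      field_simp
    have hupper : Q t₀ u₁ ≤ C*A + (C*A+ε) * b * (a-1) / 2 + (C*A+ε) * a * (b-1) / 2 := by
      calc Q t₀ u₁ ≤ C * Q 0 u₁ + c * (∫ x in (0:ℝ)..t₀, Q x u₁)
            + c * (∫ y in (0:ℝ)..u₁, Q t₀ y) := hmain
        _ ≤ C * A + c * ((C*A+ε) * b * ((a - 1) / (2*c)))
            + c * ((C*A+ε) * a * ((b - 1) / (2*c))) := by
            have h1 := mul_le_mul_of_nonneg_left hI1 hc
            have h2 := mul_le_mul_of_nonneg_left hI2 hc
            rw [hcmp1] at h1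
            rw [hcmp2] at h2
            linarith
        _ = C*A + (C*A+ε) * b * (a-1) / 2 + (C*A+ε) * a * (b-1) / 2 := by
            rw [hdiv1, hdiv2]
    rw [hab] at hψQ
    have hCA : (0:ℝ) ≤ C*A := mul_nonneg (by linarith) hA
    have hCAε : (0:ℝ) ≤ C*A + ε := by linarith
    nlinarith [mul_nonneg hCAε (by linarith : (0:ℝ) ≤ a + b - 2)]
  -- conclude
  have hpt : ((t, u₀) : ℝ × ℝ) ∈ K := ⟨ht, ⟨hu₀0, le_refl u₀⟩⟩
  have hE : Real.exp (2*c*(t+u₀)) = Real.exp (2*c*t) * Real.exp (2*c*u₀) := by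
    rw [← Real.exp_add, mul_add]
  have hEpos : 0 < Real.exp (2*c*t) * Real.exp (2*c*u₀) := by positivity
  refine le_of_forall_pos_le_add ?_
  intro ε hε
  have hδ : 0 < ε / (Real.exp (2*c*t) * Real.exp (2*c*u₀)) := div_pos hε hEpos
  have h := (key _ hδ (t, u₀) hpt).le
  simp only at h
  rw [hE] at h
  calc Q t u₀ ≤ (C*A + ε / (Real.exp (2*c*t) * Real.exp (2*c*u₀)))
        * (Real.exp (2*c*t) * Real.exp (2*c*u₀)) := h
    _ = C * A * Real.exp (2*c*t) * Real.exp (2*c*u₀) + ε := by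
        field_simp
    _ = C * Q 0 u₀ * Real.exp (2*c*t) * Real.exp (2*c*u₀) + ε := by rw [hAdef]
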